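/- Let G be a group and φ : G → Aut(G) a homomorphism. Define a binary operation on G by g₁ ∘_φ g₂ = g₁ · φ(g₁)⁻¹(g₂). Then ∘_φ is associative if and only if φ(φ(g⁻¹)(h)) = φ(g⁻¹ h g) for all g, h ∈ G. -/

import Mathlib

/-- The deformed multiplication `g₁ ∘_φ g₂ = g₁ · φ(g₁)⁻¹(g₂)`. -/
def dmul {G : Type*} [Group G] (φ : G →* MulAut G) (a b : G) : G :=
  a * (φ a)⁻¹ b

theorem dmul_assoc_iff {G : Type*} [Group G] (φ : G →* MulAut G) :
    (∀ a b c : G, dmul φ a (dmul φ b c) = dmul φ (dmul φ a b) c) ↔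
      ∀ g h : G, φ ((φ (g⁻¹)) h) = φ (g⁻¹ * h * g) := by
  have key : (∀ a b c : G, dmul φ a (dmul φ b c) = dmul φ (dmul φ a b) c) ↔
      ∀ a b : G, φ (a * (φ a)⁻¹ b) = φ b * φ a := by
    constructor
    · intro H a b
      ext d
      have h := H a b ((φ b) ((φ a) d))
      simp only [dmul, map_mul, mul_assoc, mul_right_inj, MulAut.inv_apply_self,
        MulEquiv.apply_symm_apply] at h
      have h2 := congrArg (fun x => (φ a) ((φ ((φ a)⁻¹ b)) x)) h
      simpa [map_mul] using h2
    · intro H a b c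
      simp only [dmul, map_mul, mul_assoc, mul_right_inj, H a b]
      simp [map_mul]
  rw [key]
  constructor
  · intro H g h
    have h1 := H g⁻¹ ((φ g⁻¹) h)
    rw [show (φ g⁻¹)⁻¹ ((φ g⁻¹) h) = h from (φ g⁻¹).symm_apply_apply h] at h1
    have h2 : φ ((φ g⁻¹) h) = φ (g⁻¹ * h) * (φ g⁻¹)⁻¹ := by
      rw [eq_mul_inv_iff_mul_eq]; exact h1.symm
    rw [h2, ← map_inv, inv_inv, ← map_mul, mul_assoc]
  · intro H a b
    have h1 := H a⁻¹ ((φ a)⁻¹ b)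
    rw [inv_inv] at h1
    rw [show (φ a) ((φ a)⁻¹ b) = b from (φ a).apply_symm_apply b] at h1
    rw [h1]
    simp [map_mul, mul_assoc]
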